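/- For $S_1 := \mathbb{R} \times \{0\}$ and $S_2 := \{0\} \times \mathbb{R}$ in $\mathbb{R}^2$ and $\bar x := (0,0)$, the paratingent cone to the union $S_1 \cup S_2$ at $\bar x$ is all of $\mathbb{R}^2$, which strictly contains $T^{\mathrm{P}}_{S_1}(\bar x) \cup T^{\mathrm{P}}_{S_2}(\bar x) = S_1 \cup S_2$; hence the union formula for the paratingent cone fails in general. -/

import Mathlib

open Filter Topology Set

/-- Tangent (contingent) cone via sequences. -/
def seqTangent {E : Type*} [AddCommGroup E] [Module ℝ E] [TopologicalSpace E]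
    (C : Set E) (x : E) : Set E :=
  {d | ∃ (dk : ℕ → E) (tk : ℕ → ℝ),
    Tendsto dk atTop (𝓝 d) ∧ Tendsto tk atTop (𝓝 0) ∧
    (∀ k, 0 < tk k) ∧ ∀ k, x + tk k • dk k ∈ C}

/-- Limiting tangent cone. -/
def limitingTangent {E : Type*} [AddCommGroup E] [Module ℝ E] [TopologicalSpace E]
    (C : Set E) (xb : E) : Set E :=
  {d | ∃ (xk : ℕ → E) (dk : ℕ → E),
    Tendsto xk atTop (𝓝 xb) ∧ Tendsto dk atTop (𝓝 d) ∧
    ∀ k, xk k ∈ C ∧ dk k ∈ seqTangent C (xk k)}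

/-- Paratingent cone. -/
def paratingent {E : Type*} [AddCommGroup E] [Module ℝ E] [TopologicalSpace E]
    (C : Set E) (xb : E) : Set E :=
  {d | ∃ (xk dk : ℕ → E) (tk : ℕ → ℝ),
    Tendsto xk atTop (𝓝 xb) ∧ Tendsto dk atTop (𝓝 d) ∧ Tendsto tk atTop (𝓝 0) ∧
    (∀ k, 0 < tk k) ∧ ∀ k, xk k ∈ C ∧ xk k + tk k • dk k ∈ C}

lemma coord_tendsto {f : ℕ → EuclideanSpace ℝ (Fin 2)} {d : EuclideanSpace ℝ (Fin 2)}
    (h : Tendsto f atTop (𝓝 d)) (i : Fin 2) :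
    Tendsto (fun k => f k i) atTop (𝓝 (d i)) :=
  ((EuclideanSpace.proj i).continuous.tendsto d).comp h

lemma paratingent_axis (i : Fin 2) :
    paratingent {x : EuclideanSpace ℝ (Fin 2) | x i = 0} 0
      = {x : EuclideanSpace ℝ (Fin 2) | x i = 0} := by
  ext d
  constructor
  · rintro ⟨xk, dk, tk, hx, hd, ht, htp, hmem⟩
    have hdk : ∀ k, dk k i = 0 := by
      intro k
      have h1 : xk k i = 0 := (hmem k).1
      have h2 : xk k i + tk k * dk k i = 0 := by
        simpa [PiLp.add_apply, PiLp.smul_apply, smul_eq_mul] using (hmem k).2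
      have h3 : tk k * dk k i = 0 := by linarith
      exact (mul_eq_zero.1 h3).resolve_left (ne_of_gt (htp k))
    have h0 : Tendsto (fun k => dk k i) atTop (𝓝 0) := by
      simp only [hdk]; exact tendsto_const_nhds
    exact (tendsto_nhds_unique (coord_tendsto hd i) h0)
  · intro hdi
    refine ⟨fun _ => 0, fun _ => d, fun k => 1 / (k + 1),
      tendsto_const_nhds, tendsto_const_nhds, tendsto_one_div_add_atTop_nhds_zero_nat,
      fun k => by positivity, fun k => ⟨by simp, ?_⟩⟩
    have hdi' : d i = 0 := hdi
    simp [PiLp.add_apply, PiLp.smul_apply, smul_eq_mul, hdi']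

theorem paratingent_union_formula_fails :
    paratingent ({x : EuclideanSpace ℝ (Fin 2) | x 1 = 0} ∪ {x : EuclideanSpace ℝ (Fin 2) | x 0 = 0}) 0
      = (Set.univ : Set (EuclideanSpace ℝ (Fin 2))) ∧
    paratingent {x : EuclideanSpace ℝ (Fin 2) | x 1 = 0} 0
        ∪ paratingent {x : EuclideanSpace ℝ (Fin 2) | x 0 = 0} 0
      = {x : EuclideanSpace ℝ (Fin 2) | x 1 = 0} ∪ {x : EuclideanSpace ℝ (Fin 2) | x 0 = 0} ∧
    ({x : EuclideanSpace ℝ (Fin 2) | x 1 = 0} ∪ {x : EuclideanSpace ℝ (Fin 2) | x 0 = 0})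
      ≠ (Set.univ : Set (EuclideanSpace ℝ (Fin 2))) := by
  refine ⟨?_, ?_, ?_⟩
  · ext d
    simp only [Set.mem_univ, iff_true]
    set v : EuclideanSpace ℝ (Fin 2) := !₂[0, -(d 1)] with hv
    refine ⟨fun k => (1 / (k + 1) : ℝ) • v, fun _ => d, fun k => 1 / (k + 1),
      ?_, tendsto_const_nhds, tendsto_one_div_add_atTop_nhds_zero_nat,
      fun k => by positivity, fun k => ⟨Or.inr ?_, Or.inl ?_⟩⟩
    · have := (tendsto_one_div_add_atTop_nhds_zero_nat (𝕜 := ℝ)).smul_const v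
      simpa using this
    · show ((1 / ((k:ℝ) + 1)) • v) 0 = 0
      simp [hv, PiLp.smul_apply]
    · show ((1 / ((k:ℝ) + 1)) • v + (1 / ((k:ℝ) + 1)) • d) 1 = 0
      simp [hv, PiLp.add_apply, PiLp.smul_apply]
  · rw [paratingent_axis 1, paratingent_axis 0]
  · intro h
    have : (!₂[1, 1] : EuclideanSpace ℝ (Fin 2)) ∈
        ({x : EuclideanSpace ℝ (Fin 2) | x 1 = 0} ∪ {x : EuclideanSpace ℝ (Fin 2) | x 0 = 0}) := by
      rw [h]; trivial
    rcases this with h1 | h1 <;> simp at h1
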